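/- arXiv:2106.14289 — 5 statements merged into one kernel-verified Lean document; each statement's English description precedes it below -/
import Mathlib

section
/- Let S, Σ ∈ ℝ^{d×d} be symmetric positive definite matrices, η > 0, and define S' = (I + η(Σ − S)) S (I + η(Σ − S)). Suppose σ₁(S) ≤ 2σ₁, σ_d(Σ) ≥ σ_d, and σ₁(Σ) ≤ σ₁. Let s = σ_d(S) and s' = σ_d(S'). Then for all β ∈ (0,1) and η ≤ β/(8σ₁), one has s' ≥ (1 + η(σ_d − s))² s − ((8+6β)/(1−β)) σ₁³ η². -/
open Matrix

lemma combo {d : ℕ} {M : Matrix (Fin d) (Fin d) ℝ} (hM : M.IsHermitian) (a b c : ℝ)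
    (h : ∀ i, 0 ≤ a * hM.eigenvalues i + b * (hM.eigenvalues i)^2 + c) :
    (a • M + b • M^2 + c • 1).PosSemidef := by
  set U : Matrix (Fin d) (Fin d) ℝ := (hM.eigenvectorUnitary : Matrix (Fin d) (Fin d) ℝ) with hUdef
  have hUU : star U * U = 1 := Matrix.mem_unitaryGroup_iff'.mp hM.eigenvectorUnitary.2
  have hUU' : U * star U = 1 := Matrix.mem_unitaryGroup_iff.mp hM.eigenvectorUnitary.2
  set D : Matrix (Fin d) (Fin d) ℝ := diagonal (RCLike.ofReal ∘ hM.eigenvalues) with hDdef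
  have hspec : M = U * D * star U := hM.spectral_theorem
  have hdiag : (diagonal (fun i => a * hM.eigenvalues i + b * (hM.eigenvalues i)^2 + c))
      = a • D + b • (D * D) + c • 1 := by
    rw [hDdef, diagonal_mul_diagonal]
    ext i j
    by_cases hij : i = j
    · subst hij
      simp only [diagonal_apply_eq, Matrix.add_apply, Matrix.smul_apply, Matrix.one_apply_eq,
        smul_eq_mul, mul_one, Function.comp_apply, RCLike.ofReal_real_eq_id, id_eq]
      ring
    · simp [diagonal_apply, hij, Matrix.one_apply]
  have key : a • M + b • M^2 + c • 1
      = U * (diagonal (fun i => a * hM.eigenvalues i + b * (hM.eigenvalues i)^2 + c)) * star U := by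
    have hM2 : M^2 = U * (D * D) * star U := by
      rw [pow_two, hspec]
      calc (U * D * star U) * (U * D * star U) = U * D * (star U * U) * D * star U := by
            noncomm_ring
        _ = U * (D * D) * star U := by rw [hUU]; noncomm_ring
    rw [hdiag, hM2, hspec]
    simp only [Matrix.mul_add, Matrix.add_mul, Matrix.mul_smul, Matrix.smul_mul, mul_one, hUU']
  rw [key]
  exact (posSemidef_diagonal_iff.mpr h).mul_mul_conjTranspose_same U

open scoped MatrixOrder in
lemma sqrt_exists {d : ℕ} {X : Matrix (Fin d) (Fin d) ℝ} (hX : X.PosSemidef) :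
    ∃ Q : Matrix (Fin d) (Fin d) ℝ, Q.IsHermitian ∧ Q * Q = X :=
  ⟨CFC.sqrt X, (CFC.sqrt_nonneg X).posSemidef.1, CFC.sqrt_mul_sqrt_self X hX.nonneg⟩

lemma psd_smul {d : ℕ} {M : Matrix (Fin d) (Fin d) ℝ} (hM : M.PosSemidef) {r : ℝ} (hr : 0 ≤ r) :
    (r • M).PosSemidef := by
  refine PosSemidef.of_dotProduct_mulVec_nonneg ?_ (fun x => ?_)
  · unfold Matrix.IsHermitian
    rw [conjTranspose_smul, star_trivial, hM.1.eq]
  · rw [smul_mulVec, dotProduct_smul, smul_eq_mul]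
    exact mul_nonneg hr (hM.dotProduct_mulVec_nonneg x)

lemma eig_lower {d : ℕ} [NeZero d] {M : Matrix (Fin d) (Fin d) ℝ} (hM : M.IsHermitian) (c : ℝ)
    (h : (M - c • 1).PosSemidef) (i : Fin d) : c ≤ hM.eigenvalues i := by
  set v : Fin d → ℝ := ⇑(hM.eigenvectorBasis i) with hv
  have hMv : M *ᵥ v = hM.eigenvalues i • v := hM.mulVec_eigenvectorBasis i
  have hstar : star v = v := by funext j; simp
  have hvv : v ⬝ᵥ v = 1 := by
    have hnorm : ‖hM.eigenvectorBasis i‖ = 1 := hM.eigenvectorBasis.orthonormal.1 i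
    have hinner : (inner ℝ (hM.eigenvectorBasis i) (hM.eigenvectorBasis i) : ℝ) = 1 := by
      rw [real_inner_self_eq_norm_sq, hnorm]; norm_num
    rw [← hinner, PiLp.inner_apply]
    have hvj : ∀ j, v j = hM.eigenvectorBasis i j := fun j => rfl
    simp [dotProduct, hvj, RCLike.inner_apply, sq]
  have h2 := h.dotProduct_mulVec_nonneg v
  rw [sub_mulVec, smul_mulVec, one_mulVec, dotProduct_sub, dotProduct_smul, hMv,
    dotProduct_smul, hstar, hvv] at h2
  simpa using h2

set_option maxHeartbeats 1000000 in
lemma inv_step {d : ℕ} {X : Matrix (Fin d) (Fin d) ℝ} (hX : X.PosDef) (c : ℝ)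
    (h : ((1 : Matrix (Fin d) (Fin d) ℝ) - c • X⁻¹).PosSemidef) :
    (X - c • (1 : Matrix (Fin d) (Fin d) ℝ)).PosSemidef := by
  obtain ⟨Q, hQh, hQQ⟩ : ∃ Q : Matrix (Fin d) (Fin d) ℝ, Q.IsHermitian ∧ Q * Q = X :=
    sqrt_exists hX.posSemidef
  have hXdet : IsUnit X.det := isUnit_iff_ne_zero.mpr (ne_of_gt hX.det_pos)
  have hXinvmul : X⁻¹ * X = 1 := Matrix.nonsing_inv_mul X hXdet
  have hXmulinv : X * X⁻¹ = 1 := Matrix.mul_nonsing_inv X hXdet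
  have hcomm : Q * X⁻¹ = X⁻¹ * Q := by
    have h1 : Q * X = X * Q := by rw [← hQQ, mul_assoc]
    calc Q * X⁻¹ = X⁻¹ * X * Q * X⁻¹ := by rw [hXinvmul, one_mul]
      _ = X⁻¹ * (X * Q) * X⁻¹ := by rw [mul_assoc X⁻¹ X Q]
      _ = X⁻¹ * (Q * X) * X⁻¹ := by rw [h1]
      _ = X⁻¹ * Q * (X * X⁻¹) := by rw [mul_assoc, mul_assoc, mul_assoc]
      _ = X⁻¹ * Q := by rw [hXmulinv, mul_one]
  have key : X - c • (1 : Matrix (Fin d) (Fin d) ℝ)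
      = Q * ((1 : Matrix (Fin d) (Fin d) ℝ) - c • X⁻¹) * Q := by
    rw [Matrix.mul_sub, Matrix.sub_mul, mul_one, hQQ, Matrix.mul_smul, Matrix.smul_mul]
    congr 1
    rw [hcomm, mul_assoc, hQQ, hXinvmul]
  rw [key]
  have := h.mul_mul_conjTranspose_same Q
  rwa [hQh.eq] at this


set_option maxHeartbeats 1000000 in
/-- Lemma on the one-step dynamics of the smallest eigenvalue of `S`:
if `S' = (I + η(Σ - S)) S (I + η(Σ - S))` with `S, Σ` positive definite,
`σ₁(S) ≤ 2σ₁`, `σ_d ≤ σ_d(Σ)`, `σ₁(Σ) ≤ σ₁`, then for `β ∈ (0,1)` and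
`η ≤ β/(8σ₁)` we have
`σ_d(S') ≥ (1 + η(σ_d - σ_d(S)))² σ_d(S) - (8+6β)/(1-β) σ₁³ η²`. -/
theorem stmt0 {d : ℕ} [NeZero d] (S Sig : Matrix (Fin d) (Fin d) ℝ)
    (hS : S.PosDef) (hSig : Sig.PosDef)
    (σ1 σd : ℝ) (hσd : 0 < σd) (hσ1 : σd ≤ σ1)
    (η : ℝ) (hη0 : 0 < η)
    (hSle : ∀ i, hS.1.eigenvalues i ≤ 2 * σ1)
    (hSigge : ∀ i, σd ≤ hSig.1.eigenvalues i)
    (hSigle : ∀ i, hSig.1.eigenvalues i ≤ σ1)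
    (hS'h : ((1 + η • (Sig - S)) * S * (1 + η • (Sig - S))).IsHermitian)
    (β : ℝ) (hβ : β ∈ Set.Ioo (0 : ℝ) 1) (hηβ : η ≤ β / (8 * σ1)) :
    (1 + η * (σd - ⨅ i, hS.1.eigenvalues i)) ^ 2 * (⨅ i, hS.1.eigenvalues i)
        - (8 + 6 * β) / (1 - β) * σ1 ^ 3 * η ^ 2
      ≤ ⨅ i, hS'h.eigenvalues i := by
  obtain ⟨hβ0, hβ1⟩ := hβ
  have hσ1pos : 0 < σ1 := lt_of_lt_of_le hσd hσ1
  have hη8 : 8 * η * σ1 ≤ β := by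
    have := (le_div_iff₀ (by positivity)).mp hηβ
    linarith
  set s : ℝ := ⨅ i, hS.1.eigenvalues i with hs_def
  have hsle : ∀ i, s ≤ hS.1.eigenvalues i := fun i =>
    ciInf_le (Finite.bddBelow_range _) i
  obtain ⟨i0, hi0⟩ := Finite.exists_min hS.1.eigenvalues
  have hs_eq : s = hS.1.eigenvalues i0 :=
    le_antisymm (ciInf_le (Finite.bddBelow_range _) i0) (le_ciInf hi0)
  have hs_pos : 0 < s := hs_eq ▸ hS.eigenvalues_pos i0
  have hs_le2 : s ≤ 2 * σ1 := hs_eq ▸ hSle i0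
  set c : ℝ := s * (1 + 2 * η * (σd - s)) with hc_def
  set A : Matrix (Fin d) (Fin d) ℝ := 1 + η • (Sig - S) with hA_def
  have hDDh : (Sig - S).IsHermitian := hSig.1.sub hS.1
  have hAh : A.IsHermitian := by
    rw [hA_def]
    have hsm : (η • (Sig - S)).IsHermitian := by
      unfold Matrix.IsHermitian
      rw [conjTranspose_smul, star_trivial, hDDh.eq]
    exact isHermitian_one.add hsm
  -- quadratic form upper bound for S
  have hSupper : ∀ x : Fin d → ℝ, star x ⬝ᵥ (S *ᵥ x) ≤ (2 * σ1) * (star x ⬝ᵥ x) := by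
    intro x
    have hP0 : ((-1 : ℝ) • S + (0:ℝ) • S^2 + (2*σ1) • (1 : Matrix (Fin d) (Fin d) ℝ)).PosSemidef :=
      combo hS.1 (-1) 0 (2*σ1) (fun i => by have := hSle i; nlinarith)
    have := hP0.dotProduct_mulVec_nonneg x
    simp only [add_mulVec, smul_mulVec, zero_smul, one_mulVec, dotProduct_add,
      dotProduct_smul, smul_eq_mul, zero_mulVec, dotProduct_zero, neg_one_mul, neg_smul,
      one_smul, Matrix.neg_mulVec, dotProduct_neg] at this
    linarith
  -- A is positive definite
  have hApd : A.PosDef := by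
    refine PosDef.of_dotProduct_mulVec_pos hAh (fun x hx => ?_)
    have hxx : 0 < star x ⬝ᵥ x := dotProduct_star_self_pos_iff.mpr hx
    have hsig := hSig.posSemidef.dotProduct_mulVec_nonneg x
    have hup := hSupper x
    have hexp : star x ⬝ᵥ (A *ᵥ x)
        = star x ⬝ᵥ x + η * (star x ⬝ᵥ (Sig *ᵥ x)) - η * (star x ⬝ᵥ (S *ᵥ x)) := by
      rw [hA_def]
      simp only [add_mulVec, one_mulVec, smul_mulVec, sub_mulVec, dotProduct_add,
        dotProduct_smul, dotProduct_sub, smul_eq_mul]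
      ring
    rw [hexp]
    nlinarith
  have hAdet : IsUnit A.det := isUnit_iff_ne_zero.mpr (ne_of_gt hApd.det_pos)
  have hAinvmul : A⁻¹ * A = 1 := Matrix.nonsing_inv_mul A hAdet
  have hAmulinv : A * A⁻¹ = 1 := Matrix.mul_nonsing_inv A hAdet
  have hAinvh : A⁻¹.IsHermitian := hAh.inv
  -- square root of S
  obtain ⟨R, hRh, hRR⟩ : ∃ R : Matrix (Fin d) (Fin d) ℝ, R.IsHermitian ∧ R * R = S :=
    sqrt_exists hS.posSemidef
  have hRdet : IsUnit R.det := by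
    refine isUnit_iff_ne_zero.mpr fun h0 => ?_
    have : S.det = 0 := by rw [← hRR, det_mul, h0, mul_zero]
    exact (ne_of_gt hS.det_pos) this
  have hRinvmul : R⁻¹ * R = 1 := Matrix.nonsing_inv_mul R hRdet
  have hRmulinv : R * R⁻¹ = 1 := Matrix.mul_nonsing_inv R hRdet
  have hRinvh : R⁻¹.IsHermitian := hRh.inv
  have hSinv : S⁻¹ = R⁻¹ * R⁻¹ := by rw [← hRR, Matrix.mul_inv_rev]
  -- the polynomial matrix P
  set P : Matrix (Fin d) (Fin d) ℝ :=
    (1 + 2*η*σd) • S + (-(2*η)) • S^2 + (-c) • (1 : Matrix (Fin d) (Fin d) ℝ) with hP_def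
  have hPpsd : P.PosSemidef := by
    refine combo hS.1 _ _ _ (fun i => ?_)
    have h1 := hsle i
    have h2 := hSle i
    have h3 : 0 ≤ 1 + 2*η*σd - 2*η*(hS.1.eigenvalues i + s) := by nlinarith
    have h4 := mul_nonneg (sub_nonneg.mpr h1) h3
    rw [hc_def]
    nlinarith
  have hterm1 : (R⁻¹ * P * R⁻¹).PosSemidef := by
    have := hPpsd.mul_mul_conjTranspose_same R⁻¹
    rwa [hRinvh.eq] at this
  have hexpP : R⁻¹ * P * R⁻¹
      = (1 + 2*η*σd) • (1 : Matrix (Fin d) (Fin d) ℝ) + (-(2*η)) • S + (-c) • S⁻¹ := by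
    have e1 : R⁻¹ * S * R⁻¹ = 1 := by
      rw [← hRR]
      have ha : R⁻¹ * (R * R) * R⁻¹ = (R⁻¹ * R) * (R * R⁻¹) := by noncomm_ring
      rw [ha, hRinvmul, hRmulinv, one_mul]
    have e2 : R⁻¹ * S^2 * R⁻¹ = S := by
      rw [sq, ← hRR]
      have ha : R⁻¹ * (R * R * (R * R)) * R⁻¹ = (R⁻¹ * R) * (R * R) * (R * R⁻¹) := by
        noncomm_ring
      rw [ha, hRinvmul, hRmulinv, one_mul, mul_one]
    rw [hP_def]
    simp only [Matrix.add_mul, Matrix.mul_add, Matrix.smul_mul, Matrix.mul_smul, mul_one]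
    rw [e1, e2, hSinv]
  -- Sig - σd • 1 is PSD
  have hSigpsd : (Sig + (-σd) • (1 : Matrix (Fin d) (Fin d) ℝ)).PosSemidef := by
    have := combo hSig.1 1 0 (-σd) (fun i => by have := hSigge i; nlinarith)
    have heq : (1:ℝ) • Sig + (0:ℝ) • Sig^2 + (-σd) • (1 : Matrix (Fin d) (Fin d) ℝ)
        = Sig + (-σd) • (1 : Matrix (Fin d) (Fin d) ℝ) := by
      rw [one_smul, zero_smul, add_zero]
    rwa [heq] at this
  have hDD2psd : ((η^2) • ((Sig - S) * (Sig - S))).PosSemidef := by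
    refine psd_smul ?_ (sq_nonneg η)
    have := posSemidef_conjTranspose_mul_self (Sig - S)
    rwa [hDDh.eq] at this
  -- main PSD fact for A * A - c • S⁻¹
  have hbig : (A * A - c • S⁻¹).PosSemidef := by
    have heq : A * A - c • S⁻¹
        = (R⁻¹ * P * R⁻¹) + ((2*η) • (Sig + (-σd) • (1 : Matrix (Fin d) (Fin d) ℝ))
            + (η^2) • ((Sig - S) * (Sig - S))) := by
      rw [hexpP, hA_def]
      simp only [Matrix.add_mul, Matrix.mul_add, Matrix.smul_mul, Matrix.mul_smul, mul_one,
        one_mul, smul_smul]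
      module
    rw [heq]
    exact hterm1.add ((psd_smul hSigpsd (by positivity)).add hDD2psd)
  -- X = A * S * A is positive definite
  have hXpd : (A * S * A).PosDef := by
    refine PosDef.of_dotProduct_mulVec_pos hS'h (fun x hx => ?_)
    have hAx : A *ᵥ x ≠ 0 := by
      intro h0
      apply hx
      have : A⁻¹ *ᵥ (A *ᵥ x) = x := by rw [mulVec_mulVec, hAinvmul, one_mulVec]
      rw [h0, mulVec_zero] at this
      exact this.symm
    have hrw : star x ⬝ᵥ ((A * S * A) *ᵥ x) = star (A *ᵥ x) ⬝ᵥ (S *ᵥ (A *ᵥ x)) := by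
      rw [← mulVec_mulVec, ← mulVec_mulVec, dotProduct_mulVec, star_mulVec, hAh.eq]
    rw [hrw]
    exact hS.dotProduct_mulVec_pos hAx
  have hXinv : (A * S * A)⁻¹ = A⁻¹ * (S⁻¹ * A⁻¹) := by
    rw [Matrix.mul_inv_rev, Matrix.mul_inv_rev]
  have hone : ((1 : Matrix (Fin d) (Fin d) ℝ) - c • (A * S * A)⁻¹).PosSemidef := by
    have heq2 : (1 : Matrix (Fin d) (Fin d) ℝ) - c • (A * S * A)⁻¹
        = A⁻¹ * (A * A - c • S⁻¹) * A⁻¹ := by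
      rw [hXinv]
      rw [Matrix.mul_sub, Matrix.sub_mul, Matrix.mul_smul, Matrix.smul_mul]
      congr 1
      · have ha : A⁻¹ * (A * A) * A⁻¹ = (A⁻¹ * A) * (A * A⁻¹) := by noncomm_ring
        rw [ha, hAinvmul, hAmulinv, one_mul]
      · rw [mul_assoc]
    have := hbig.mul_mul_conjTranspose_same A⁻¹
    rw [hAinvh.eq] at this
    rwa [← heq2] at this
  have hfinal : ((A * S * A) - c • (1 : Matrix (Fin d) (Fin d) ℝ)).PosSemidef :=
    inv_step hXpd c hone
  have heig : ∀ i, c ≤ hS'h.eigenvalues i := eig_lower hS'h c hfinal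
  refine le_trans ?_ (le_ciInf heig)
  -- arithmetic
  have hK : (8:ℝ) ≤ (8 + 6*β) / (1 - β) := by
    rw [le_div_iff₀ (by linarith)]
    nlinarith
  have hsd2 : (σd - s)^2 ≤ 4 * σ1^2 := by nlinarith
  have e5a := mul_nonneg (sub_nonneg.mpr hsd2) hs_pos.le
  have e5b := mul_nonneg (mul_nonneg (by norm_num : (0:ℝ) ≤ 4) (sq_nonneg σ1))
    (sub_nonneg.mpr hs_le2)
  have e5 : (σd - s)^2 * s ≤ 8 * σ1^3 := by nlinarith
  have h2 : η^2 * (σd - s)^2 * s ≤ 8 * σ1^3 * η^2 := by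
    nlinarith [mul_le_mul_of_nonneg_left e5 (sq_nonneg η)]
  have h3 : 8 * σ1^3 * η^2 ≤ (8 + 6*β) / (1 - β) * σ1^3 * η^2 := by
    nlinarith [mul_nonneg (sub_nonneg.mpr hK) (mul_nonneg (pow_pos hσ1pos 3).le (sq_nonneg η))]
  rw [hc_def]
  nlinarith [h2, h3]
end

section
/- Let P, Σ ∈ ℝ^{d×d} be symmetric matrices, η > 0, and define P' = (I − η(Σ − P)) P (I − η(Σ − P)). Suppose σ₁(P) ≤ 2σ₁ and σ_d I ⪯ Σ ⪯ σ₁ I. Let p = λ_d(P) and p' = λ_d(P'). Then for all β ∈ (0,1) and η ≤ β/(8σ₁): if p < 0 then p' ≥ (1 − ησ_d)² p − ((8+6β)/(1−β)) σ₁³ η², and if p ≥ 0 then p' ≥ 0. -/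
open Matrix
set_option linter.unusedSectionVars false
set_option maxHeartbeats 800000

section Helpers
variable {n : Type*} [Fintype n] [DecidableEq n]

lemma psd_dot {R : Matrix n n ℝ} (hR : R.PosSemidef) (x : n → ℝ) :
    0 ≤ x ⬝ᵥ (R *ᵥ x) := by simpa using hR.dotProduct_mulVec_nonneg x

lemma herm_transpose {R : Matrix n n ℝ} (hR : R.IsHermitian) : Rᵀ = R := by
  have := hR
  rwa [Matrix.IsHermitian, conjTranspose_eq_transpose_of_trivial] at this

lemma dot_symm {R : Matrix n n ℝ} (hR : R.IsHermitian) (u v : n → ℝ) :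
    u ⬝ᵥ (R *ᵥ v) = v ⬝ᵥ (R *ᵥ u) := by
  rw [Matrix.dotProduct_mulVec, ← Matrix.mulVec_transpose, herm_transpose hR, dotProduct_comm]

lemma dot_self_nonneg (v : n → ℝ) : 0 ≤ v ⬝ᵥ v :=
  Finset.sum_nonneg fun i _ => mul_self_nonneg (v i)

lemma diag_real (N : Matrix n n ℝ) (hN : N.IsHermitian) :
    diagonal (RCLike.ofReal ∘ hN.eigenvalues) = diagonal hN.eigenvalues := by
  congr 1

lemma smul_one_diag (c : ℝ) : c • (1 : Matrix n n ℝ) = diagonal (fun _ => c) := by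
  ext i j
  by_cases h : i = j <;> simp [Matrix.one_apply, Matrix.diagonal_apply, h]

lemma const_psd (c : ℝ) (hc : 0 ≤ c) : ((c • 1 : Matrix n n ℝ)).PosSemidef := by
  rw [smul_one_diag]; exact posSemidef_diagonal_iff.mpr fun _ => hc

lemma conj_unit (N : Matrix n n ℝ) (hN : N.IsHermitian) (c : ℝ) :
    (hN.eigenvectorUnitary : Matrix n n ℝ) * (c • 1) *
      star (hN.eigenvectorUnitary : Matrix n n ℝ) = c • 1 := by
  have h := (Matrix.mem_unitaryGroup_iff).mp hN.eigenvectorUnitary.2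
  rw [Matrix.mul_smul, Matrix.mul_one, Matrix.smul_mul, h]

lemma conj_diag_psd {N : Matrix n n ℝ} (hN : N.IsHermitian) (f : n → ℝ)
    (hf : ∀ i, 0 ≤ f i) :
    ((hN.eigenvectorUnitary : Matrix n n ℝ) * diagonal f *
      star (hN.eigenvectorUnitary : Matrix n n ℝ)).PosSemidef := by
  have hd : (diagonal f : Matrix n n ℝ).PosSemidef := posSemidef_diagonal_iff.mpr hf
  have := hd.mul_mul_conjTranspose_same (hN.eigenvectorUnitary : Matrix n n ℝ)
  rwa [← Matrix.star_eq_conjTranspose] at this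

lemma diagSub (f : n → ℝ) (c : ℝ) :
    (diagonal (fun i => f i - c) : Matrix n n ℝ) = diagonal f - diagonal (fun _ => c) := by
  ext i j
  by_cases h : i = j <;> simp [Matrix.diagonal_apply, h]

lemma shifted_psd {N : Matrix n n ℝ} (hN : N.IsHermitian) (c : ℝ)
    (h : ∀ i, c ≤ hN.eigenvalues i) : (N - c • 1).PosSemidef := by
  have key : N - c • 1 = (hN.eigenvectorUnitary : Matrix n n ℝ) *
      diagonal (fun i => hN.eigenvalues i - c) *
      star (hN.eigenvectorUnitary : Matrix n n ℝ) := by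
    rw [diagSub, Matrix.mul_sub, Matrix.sub_mul, ← smul_one_diag, conj_unit N hN c]
    conv_lhs => rw [hN.spectral_theorem, diag_real]; simp only [Unitary.conjStarAlgAut_apply, Unitary.coe_star]
  rw [key]
  exact conj_diag_psd hN _ fun i => sub_nonneg.mpr (h i)

lemma shifted_psd' {N : Matrix n n ℝ} (hN : N.IsHermitian) (c : ℝ)
    (h : ∀ i, hN.eigenvalues i ≤ c) : (c • 1 - N).PosSemidef := by
  have key : c • 1 - N = (hN.eigenvectorUnitary : Matrix n n ℝ) *
      diagonal (fun i => c - hN.eigenvalues i) *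
      star (hN.eigenvectorUnitary : Matrix n n ℝ) := by
    have e : (diagonal (fun i => c - hN.eigenvalues i) : Matrix n n ℝ)
        = diagonal (fun _ => c) - diagonal hN.eigenvalues := by
      ext i j
      by_cases hij : i = j <;> simp [Matrix.diagonal_apply, hij]
    rw [e, Matrix.mul_sub, Matrix.sub_mul, ← smul_one_diag, conj_unit N hN c]
    conv_lhs => rw [hN.spectral_theorem, diag_real]; simp only [Unitary.conjStarAlgAut_apply, Unitary.coe_star]
  rw [key]
  exact conj_diag_psd hN _ fun i => sub_nonneg.mpr (h i)

lemma sq_psd {N : Matrix n n ℝ} (hN : N.IsHermitian) (c : ℝ)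
    (h : ∀ i, |hN.eigenvalues i| ≤ c) : (c ^ 2 • 1 - N * N).PosSemidef := by
  have hUU : star (hN.eigenvectorUnitary : Matrix n n ℝ) *
      (hN.eigenvectorUnitary : Matrix n n ℝ) = 1 :=
    (Matrix.mem_unitaryGroup_iff').mp hN.eigenvectorUnitary.2
  have hNN : N * N = (hN.eigenvectorUnitary : Matrix n n ℝ) *
      diagonal (fun i => hN.eigenvalues i ^ 2) *
      star (hN.eigenvectorUnitary : Matrix n n ℝ) := by
    conv_lhs => rw [hN.spectral_theorem, diag_real]; simp only [Unitary.conjStarAlgAut_apply, Unitary.coe_star]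
    have e : (diagonal (fun i => hN.eigenvalues i ^ 2) : Matrix n n ℝ)
        = diagonal hN.eigenvalues * diagonal hN.eigenvalues := by
      rw [diagonal_mul_diagonal]
      exact congrArg diagonal (funext fun i => sq (hN.eigenvalues i))
    have inner : star (hN.eigenvectorUnitary : Matrix n n ℝ) *
        ((hN.eigenvectorUnitary : Matrix n n ℝ) * (diagonal hN.eigenvalues *
        star (hN.eigenvectorUnitary : Matrix n n ℝ))) = diagonal hN.eigenvalues *
        star (hN.eigenvectorUnitary : Matrix n n ℝ) := by
      rw [← Matrix.mul_assoc, hUU, Matrix.one_mul]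
    rw [e]
    simp only [Matrix.mul_assoc]
    rw [inner]
  have key : c ^ 2 • 1 - N * N = (hN.eigenvectorUnitary : Matrix n n ℝ) *
      diagonal (fun i => c ^ 2 - hN.eigenvalues i ^ 2) *
      star (hN.eigenvectorUnitary : Matrix n n ℝ) := by
    have e : (diagonal (fun i => c ^ 2 - hN.eigenvalues i ^ 2) : Matrix n n ℝ)
        = diagonal (fun _ => c ^ 2) - diagonal (fun i => hN.eigenvalues i ^ 2) := by
      ext i j
      by_cases hij : i = j <;> simp [Matrix.diagonal_apply, hij]
    rw [e, Matrix.mul_sub, Matrix.sub_mul, ← smul_one_diag, conj_unit N hN (c ^ 2), hNN]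
  rw [key]
  refine conj_diag_psd hN _ fun i => ?_
  have := h i
  nlinarith [abs_nonneg (hN.eigenvalues i), sq_abs (hN.eigenvalues i)]

lemma psd_cs {R : Matrix n n ℝ} (hR : R.PosSemidef) (u v : n → ℝ) :
    (u ⬝ᵥ (R *ᵥ v)) ^ 2 ≤ (u ⬝ᵥ (R *ᵥ u)) * (v ⬝ᵥ (R *ᵥ v)) := by
  have key : ∀ t : ℝ, 0 ≤ (v ⬝ᵥ (R *ᵥ v)) * (t * t) + (2 * (u ⬝ᵥ (R *ᵥ v))) * t
      + (u ⬝ᵥ (R *ᵥ u)) := by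
    intro t
    have h := psd_dot hR (u + t • v)
    have e : (u + t • v) ⬝ᵥ (R *ᵥ (u + t • v))
        = (v ⬝ᵥ (R *ᵥ v)) * (t * t) + (2 * (u ⬝ᵥ (R *ᵥ v))) * t + (u ⬝ᵥ (R *ᵥ u)) := by
      rw [Matrix.mulVec_add, Matrix.mulVec_smul, dotProduct_add, add_dotProduct,
        add_dotProduct, dotProduct_smul, smul_dotProduct, smul_dotProduct,
        dot_symm hR.1 v u]
      simp [smul_eq_mul]; ring
    rwa [e] at h
  have hd := discrim_le_zero key
  rw [discrim] at hd
  nlinarith [hd]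

lemma exists_unit_eigenvector {N : Matrix n n ℝ} (hN : N.IsHermitian) (i : n) :
    ∃ v : n → ℝ, v ⬝ᵥ v = 1 ∧ N *ᵥ v = hN.eigenvalues i • v := by
  refine ⟨hN.eigenvectorBasis i, ?_, hN.mulVec_eigenvectorBasis i⟩
  have h1 : ‖hN.eigenvectorBasis i‖ = 1 := hN.eigenvectorBasis.orthonormal.1 i
  have h2 : (inner ℝ (hN.eigenvectorBasis i) (hN.eigenvectorBasis i) : ℝ) = 1 := by
    rw [real_inner_self_eq_norm_mul_norm, h1]; norm_num
  rw [EuclideanSpace.inner_eq_star_dotProduct] at h2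
  simpa using h2

lemma dot_smul_one (c : ℝ) (v : n → ℝ) :
    v ⬝ᵥ ((c • (1 : Matrix n n ℝ)) *ᵥ v) = c * (v ⬝ᵥ v) := by
  rw [smul_mulVec, one_mulVec, dotProduct_smul, smul_eq_mul]

lemma psd_dot_ub {M : Matrix n n ℝ} {c : ℝ} (h : (c • 1 - M).PosSemidef) (v : n → ℝ) :
    v ⬝ᵥ (M *ᵥ v) ≤ c * (v ⬝ᵥ v) := by
  have h0 := psd_dot h v
  rw [sub_mulVec, dotProduct_sub, dot_smul_one] at h0
  linarith

lemma psd_dot_lb {M : Matrix n n ℝ} {c : ℝ} (h : (M - c • 1).PosSemidef) (v : n → ℝ) :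
    c * (v ⬝ᵥ v) ≤ v ⬝ᵥ (M *ᵥ v) := by
  have h0 := psd_dot h v
  rw [sub_mulVec, dotProduct_sub, dot_smul_one] at h0
  linarith

end Helpers

lemma scalar_final (p q s η σ1 σd β : ℝ) (hq : 0 ≤ q) (hs0 : 0 ≤ s) (hs : s ^ 2 = σ1 ^ 3 * q)
    (hp0 : p < 0) (hpg : -(2 * σ1) ≤ p) (hσd : 0 < σd) (hσ : σd ≤ σ1) (hη : 0 < η)
    (hησ : 8 * η * σ1 ≤ β) (hβ0 : 0 < β) (hβ1 : β < 1) :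
    (1 - η * σd) ^ 2 * p - (8 + 6 * β) / (1 - β) * σ1 ^ 3 * η ^ 2
      ≤ q + 2 * η * (p * q - 2 * s) + p * (1 + 2 * η * (q + p - σd) + 9 * η ^ 2 * σ1 ^ 2) := by
  have hσ1pos : 0 < σ1 := lt_of_lt_of_le hσd hσ
  have h1β : 0 < 1 - β := by linarith
  have step1 : -(4 * η ^ 2 * σ1 ^ 3) / (1 - β) ≤ (1 - β) * q - 4 * η * s := by
    rw [div_le_iff₀ h1β]
    have key : σ1 ^ 3 * (((1 - β) * q - 4 * η * s) * (1 - β) + 4 * η ^ 2 * σ1 ^ 3)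
        = ((1 - β) * s - 2 * η * σ1 ^ 3) ^ 2 := by
      linear_combination (-(1 - β) ^ 2) * hs
    have hX : 0 ≤ ((1 - β) * q - 4 * η * s) * (1 - β) + 4 * η ^ 2 * σ1 ^ 3 := by
      have h0 : 0 ≤ σ1 ^ 3 * (((1 - β) * q - 4 * η * s) * (1 - β) + 4 * η ^ 2 * σ1 ^ 3) := by
        rw [key]; positivity
      exact nonneg_of_mul_nonneg_right h0 (pow_pos hσ1pos 3)
    linarith
  have step2 : -(81 / 64) * β * η ^ 2 * σ1 ^ 3 ≤ 2 * η * p ^ 2 + 9 * η ^ 2 * σ1 ^ 2 * p := by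
    nlinarith [mul_nonneg hη.le (sq_nonneg (4 * p + 9 * η * σ1 ^ 2)),
      mul_le_mul_of_nonneg_left hησ (by positivity : (0:ℝ) ≤ (81 / 64) * η ^ 2 * σ1 ^ 2)]
  have step3 : (1 - β) * q ≤ q * (1 + 4 * η * p) := by
    have h4 : 0 ≤ β + 4 * η * p := by nlinarith
    nlinarith [mul_nonneg hq h4]
  have hA2 : -((8 + 6 * β) / (1 - β) * σ1 ^ 3 * η ^ 2)
      ≤ -(4 * η ^ 2 * σ1 ^ 3) / (1 - β) + (-(81 / 64) * β * η ^ 2 * σ1 ^ 3) := by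
    have e2 : (8 + 6 * β) / (1 - β) * σ1 ^ 3 * η ^ 2
        = 4 * η ^ 2 * σ1 ^ 3 / (1 - β) + (4 + 6 * β) / (1 - β) * (σ1 ^ 3 * η ^ 2) := by
      field_simp
      ring
    have hb : (81 / 64) * β ≤ (4 + 6 * β) / (1 - β) := by
      rw [le_div_iff₀ h1β]
      nlinarith
    have h3 := mul_le_mul_of_nonneg_right hb (by positivity : (0:ℝ) ≤ σ1 ^ 3 * η ^ 2)
    have e3 : -(4 * η ^ 2 * σ1 ^ 3) / (1 - β) = -(4 * η ^ 2 * σ1 ^ 3 / (1 - β)) := by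
      ring
    rw [e3]
    linarith
  have hA3 : η ^ 2 * σd ^ 2 * p ≤ 0 :=
    mul_nonpos_of_nonneg_of_nonpos (by positivity) hp0.le
  have expand : (1 - η * σd) ^ 2 * p = p - 2 * η * σd * p + η ^ 2 * σd ^ 2 * p := by ring
  have expandR : q + 2 * η * (p * q - 2 * s) + p * (1 + 2 * η * (q + p - σd) + 9 * η ^ 2 * σ1 ^ 2)
      = (q * (1 + 4 * η * p) - 4 * η * s) + (2 * η * p ^ 2 + 9 * η ^ 2 * σ1 ^ 2 * p)
        + p - 2 * η * σd * p := by ring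
  linarith

/-- Lemma on the one-step dynamics of the smallest eigenvalue of `P`:
if `P' = (I - η(Σ - P)) P (I - η(Σ - P))` with `P, Σ` symmetric,
`σ₁(P) ≤ 2σ₁`, `σ_d I ⪯ Σ ⪯ σ₁ I`, then for `β ∈ (0,1)` and `η ≤ β/(8σ₁)`:
if `λ_d(P) < 0` then `λ_d(P') ≥ (1 - ησ_d)² λ_d(P) - (8+6β)/(1-β) σ₁³ η²`,
and if `λ_d(P) ≥ 0` then `λ_d(P') ≥ 0`. -/
theorem stmt1 {d : ℕ} [NeZero d] (P Sig : Matrix (Fin d) (Fin d) ℝ)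
    (hP : P.IsHermitian) (hSig : Sig.IsHermitian)
    (σ1 σd : ℝ) (hσd : 0 < σd) (hσ1 : σd ≤ σ1)
    (η : ℝ) (hη0 : 0 < η)
    (hPle : ∀ i, |hP.eigenvalues i| ≤ 2 * σ1)
    (hSigge : (Sig - σd • (1 : Matrix (Fin d) (Fin d) ℝ)).PosSemidef)
    (hSigle : (σ1 • (1 : Matrix (Fin d) (Fin d) ℝ) - Sig).PosSemidef)
    (hP'h : ((1 - η • (Sig - P)) * P * (1 - η • (Sig - P))).IsHermitian)
    (β : ℝ) (hβ : β ∈ Set.Ioo (0 : ℝ) 1) (hηβ : η ≤ β / (8 * σ1)) :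
    ((⨅ i, hP.eigenvalues i) < 0 →
      (1 - η * σd) ^ 2 * (⨅ i, hP.eigenvalues i)
          - (8 + 6 * β) / (1 - β) * σ1 ^ 3 * η ^ 2
        ≤ ⨅ i, hP'h.eigenvalues i) ∧
    (0 ≤ (⨅ i, hP.eigenvalues i) → 0 ≤ ⨅ i, hP'h.eigenvalues i) := by
  obtain ⟨hβ0, hβ1⟩ := hβ
  have hσ1pos : 0 < σ1 := lt_of_lt_of_le hσd hσ1
  have hησ : 8 * η * σ1 ≤ β := by
    have := (le_div_iff₀ (by positivity : (0:ℝ) < 8 * σ1)).mp hηβ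
    nlinarith
  set A : Matrix (Fin d) (Fin d) ℝ := 1 - η • (Sig - P) with hAdef
  have hPe : Pᴴ = P := hP
  have hSige : Sigᴴ = Sig := hSig
  have hAherm : A.IsHermitian := by
    show Aᴴ = A
    rw [hAdef, conjTranspose_sub, conjTranspose_smul, conjTranspose_sub, conjTranspose_one,
      hPe, hSige]
    simp
  have hple : ∀ i, (⨅ j, hP.eigenvalues j) ≤ hP.eigenvalues i := fun i =>
    ciInf_le (Set.Finite.bddBelow (Set.finite_range _)) i
  have hpge : -(2 * σ1) ≤ ⨅ i, hP.eigenvalues i :=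
    le_ciInf fun i => (abs_le.mp (hPle i)).1
  constructor
  · intro hpneg
    set p := ⨅ i, hP.eigenvalues i with hpdef
    have hQpsd : (P - p • 1).PosSemidef := shifted_psd hP p hple
    have hP2a : ((2 * σ1) • (1 : Matrix (Fin d) (Fin d) ℝ) - P).PosSemidef :=
      shifted_psd' hP _ fun i => (abs_le.mp (hPle i)).2
    have hP2b : (P - (-(2 * σ1)) • (1 : Matrix (Fin d) (Fin d) ℝ)).PosSemidef :=
      shifted_psd hP _ fun i => (abs_le.mp (hPle i)).1
    have hQ4 : ((4 * σ1) • (1 : Matrix (Fin d) (Fin d) ℝ) - (P - p • 1)).PosSemidef := by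
      have e : (4 * σ1) • (1 : Matrix (Fin d) (Fin d) ℝ) - (P - p • 1)
          = ((2 * σ1) • 1 - P) + ((2 * σ1 + p) • 1) := by
        module
      rw [e]
      exact hP2a.add (const_psd _ (by linarith))
    have hSigEig : ∀ i, |hSig.eigenvalues i| ≤ σ1 := by
      intro i
      obtain ⟨v, hv1, hv2⟩ := exists_unit_eigenvector hSig i
      have he : v ⬝ᵥ (Sig *ᵥ v) = hSig.eigenvalues i := by
        rw [hv2, dotProduct_smul, hv1, smul_eq_mul, mul_one]
      have h1 := psd_dot_lb hSigge v
      have h2 := psd_dot_ub hSigle v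
      rw [hv1, mul_one] at h1 h2
      rw [he] at h1 h2
      rw [abs_le]
      constructor <;> linarith
    have hSigSq : (σ1 ^ 2 • (1 : Matrix (Fin d) (Fin d) ℝ) - Sig * Sig).PosSemidef :=
      sq_psd hSig σ1 hSigEig
    have hBherm : (P - Sig).IsHermitian := hP.sub hSig
    have hBEig : ∀ i, |hBherm.eigenvalues i| ≤ 3 * σ1 := by
      intro i
      obtain ⟨v, hv1, hv2⟩ := exists_unit_eigenvector hBherm i
      have he : v ⬝ᵥ ((P - Sig) *ᵥ v) = hBherm.eigenvalues i := by
        rw [hv2, dotProduct_smul, hv1, smul_eq_mul, mul_one]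
      have hsplit : v ⬝ᵥ ((P - Sig) *ᵥ v) = v ⬝ᵥ (P *ᵥ v) - v ⬝ᵥ (Sig *ᵥ v) := by
        rw [sub_mulVec, dotProduct_sub]
      have h1 := psd_dot_ub hP2a v
      have h2 := psd_dot_lb hP2b v
      have h3 := psd_dot_lb hSigge v
      have h4 := psd_dot_ub hSigle v
      rw [hv1, mul_one] at h1 h2 h3 h4
      rw [abs_le]
      constructor <;> [nlinarith; nlinarith]
    have hBSq : ((3 * σ1) ^ 2 • (1 : Matrix (Fin d) (Fin d) ℝ)
        - (P - Sig) * (P - Sig)).PosSemidef := sq_psd hBherm _ hBEig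
    apply le_ciInf
    intro i
    obtain ⟨x, hx1, hxe⟩ := exists_unit_eigenvector hP'h i
    have hμdef : hP'h.eigenvalues i = x ⬝ᵥ ((A * P * A) *ᵥ x) := by
      rw [hxe, dotProduct_smul, hx1, smul_eq_mul, mul_one]
    have hz : A *ᵥ x = x + η • ((P - Sig) *ᵥ x) := by
      rw [hAdef, sub_mulVec, one_mulVec, smul_mulVec, sub_mulVec, sub_mulVec]
      module
    have hμy : hP'h.eigenvalues i = (A *ᵥ x) ⬝ᵥ (P *ᵥ (A *ᵥ x)) := by
      rw [hμdef, ← Matrix.mulVec_mulVec, ← Matrix.mulVec_mulVec,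
        dot_symm hAherm x (P *ᵥ (A *ᵥ x)), dotProduct_comm]
    have hPy : ∀ v : Fin d → ℝ, P *ᵥ v = (P - p • 1) *ᵥ v + p • v := by
      intro v
      rw [sub_mulVec, smul_mulVec, one_mulVec]
      module
    set q := x ⬝ᵥ ((P - p • 1) *ᵥ x) with hqdef
    have hq0 : 0 ≤ q := psd_dot hQpsd x
    set s := Real.sqrt (σ1 ^ 3 * q) with hsdef
    have hs0 : 0 ≤ s := Real.sqrt_nonneg _
    have hss : s ^ 2 = σ1 ^ 3 * q := Real.sq_sqrt (by positivity)
    -- expansion of y ⬝ Q y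
    have hyQy : (A *ᵥ x) ⬝ᵥ ((P - p • 1) *ᵥ (A *ᵥ x))
        = q + 2 * η * (((P - Sig) *ᵥ x) ⬝ᵥ ((P - p • 1) *ᵥ x))
          + η ^ 2 * (((P - Sig) *ᵥ x) ⬝ᵥ ((P - p • 1) *ᵥ ((P - Sig) *ᵥ x))) := by
      rw [hz, Matrix.mulVec_add, Matrix.mulVec_smul, dotProduct_add, add_dotProduct,
        add_dotProduct, dotProduct_smul, smul_dotProduct, smul_dotProduct,
        dot_symm hQpsd.1 x ((P - Sig) *ᵥ x)]
      simp only [dotProduct_smul, smul_eq_mul]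
      ring
    have hyy : (A *ᵥ x) ⬝ᵥ (A *ᵥ x)
        = 1 + 2 * η * (x ⬝ᵥ ((P - Sig) *ᵥ x)) + η ^ 2 * (((P - Sig) *ᵥ x) ⬝ᵥ ((P - Sig) *ᵥ x)) := by
      rw [hz]
      simp only [dotProduct_add, add_dotProduct, dotProduct_smul, smul_dotProduct, smul_eq_mul,
        hx1]
      rw [dotProduct_comm ((P - Sig) *ᵥ x) x]
      ring
    -- bound on z ⬝ w
    have hzw : p * q - 2 * s ≤ ((P - Sig) *ᵥ x) ⬝ᵥ ((P - p • 1) *ᵥ x) := by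
      have e1 : ((P - Sig) *ᵥ x) ⬝ᵥ ((P - p • 1) *ᵥ x)
          = (P *ᵥ x) ⬝ᵥ ((P - p • 1) *ᵥ x) - (Sig *ᵥ x) ⬝ᵥ ((P - p • 1) *ᵥ x) := by
        rw [sub_mulVec, sub_dotProduct]
      have e2 : (P *ᵥ x) ⬝ᵥ ((P - p • 1) *ᵥ x)
          = ((P - p • 1) *ᵥ x) ⬝ᵥ ((P - p • 1) *ᵥ x) + p * q := by
        rw [hPy x, add_dotProduct, smul_dotProduct]
        rw [dotProduct_comm x ((P - p • 1) *ᵥ x)] at hqdef ⊢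
        simp only [smul_eq_mul]
        rw [← hqdef]
      have e3 : 0 ≤ ((P - p • 1) *ᵥ x) ⬝ᵥ ((P - p • 1) *ᵥ x) := dot_self_nonneg _
      -- Cauchy-Schwarz bound for (Sig x) ⬝ (Q x)
      have cs := psd_cs hQpsd (Sig *ᵥ x) x
      have h1 : (Sig *ᵥ x) ⬝ᵥ ((P - p • 1) *ᵥ (Sig *ᵥ x))
          ≤ 4 * σ1 * ((Sig *ᵥ x) ⬝ᵥ (Sig *ᵥ x)) := by
        have h0 := psd_dot_ub hQ4 (Sig *ᵥ x)
        linarith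
      have h2 : (Sig *ᵥ x) ⬝ᵥ (Sig *ᵥ x) ≤ σ1 ^ 2 := by
        have e4 : (Sig *ᵥ x) ⬝ᵥ (Sig *ᵥ x) = x ⬝ᵥ ((Sig * Sig) *ᵥ x) := by
          rw [dot_symm hSig (Sig *ᵥ x) x, Matrix.mulVec_mulVec]
        have h0 := psd_dot_ub hSigSq x
        rw [hx1, mul_one] at h0
        rw [e4]
        exact h0
      have h5 : 0 ≤ (Sig *ᵥ x) ⬝ᵥ ((P - p • 1) *ᵥ (Sig *ᵥ x)) := psd_dot hQpsd _
      have h6 : 0 ≤ (Sig *ᵥ x) ⬝ᵥ (Sig *ᵥ x) := dot_self_nonneg _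
      have hs4 : ((Sig *ᵥ x) ⬝ᵥ ((P - p • 1) *ᵥ x)) ^ 2 ≤ 4 * σ1 ^ 3 * q := by
        nlinarith [cs, mul_le_mul_of_nonneg_right h1 hq0,
          mul_le_mul_of_nonneg_left h2 (show (0:ℝ) ≤ 4 * σ1 * q by positivity), h5, h6]
      have h7 : (Sig *ᵥ x) ⬝ᵥ ((P - p • 1) *ᵥ x) ≤ 2 * s := by
        have e4 : 4 * σ1 ^ 3 * q = (2 * s) ^ 2 := by linear_combination -4 * hss
        calc (Sig *ᵥ x) ⬝ᵥ ((P - p • 1) *ᵥ x)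
            ≤ |(Sig *ᵥ x) ⬝ᵥ ((P - p • 1) *ᵥ x)| := le_abs_self _
          _ = Real.sqrt (((Sig *ᵥ x) ⬝ᵥ ((P - p • 1) *ᵥ x)) ^ 2) :=
              (Real.sqrt_sq_eq_abs _).symm
          _ ≤ Real.sqrt ((2 * s) ^ 2) := Real.sqrt_le_sqrt (by rw [← e4]; exact hs4)
          _ = |2 * s| := Real.sqrt_sq_eq_abs _
          _ = 2 * s := abs_of_nonneg (by linarith)
      linarith
    have hzz : ((P - Sig) *ᵥ x) ⬝ᵥ ((P - Sig) *ᵥ x) ≤ 9 * σ1 ^ 2 := by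
      have e4 : ((P - Sig) *ᵥ x) ⬝ᵥ ((P - Sig) *ᵥ x)
          = x ⬝ᵥ (((P - Sig) * (P - Sig)) *ᵥ x) := by
        rw [dot_symm hBherm ((P - Sig) *ᵥ x) x, Matrix.mulVec_mulVec]
      have h0 := psd_dot_ub hBSq x
      rw [hx1, mul_one] at h0
      rw [e4]
      nlinarith [h0]
    have hxz : x ⬝ᵥ ((P - Sig) *ᵥ x) ≤ q + p - σd := by
      have e1 : x ⬝ᵥ ((P - Sig) *ᵥ x) = x ⬝ᵥ (P *ᵥ x) - x ⬝ᵥ (Sig *ᵥ x) := by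
        rw [sub_mulVec, dotProduct_sub]
      have e2 : x ⬝ᵥ (P *ᵥ x) = q + p := by
        rw [hPy x, dotProduct_add, dotProduct_smul, hx1, smul_eq_mul, mul_one, ← hqdef]
      have e3 := psd_dot_lb hSigge x
      rw [hx1, mul_one] at e3
      linarith
    have hzQz : 0 ≤ ((P - Sig) *ᵥ x) ⬝ᵥ ((P - p • 1) *ᵥ ((P - Sig) *ᵥ x)) :=
      psd_dot hQpsd _
    have hyyub : (A *ᵥ x) ⬝ᵥ (A *ᵥ x) ≤ 1 + 2 * η * (q + p - σd) + 9 * η ^ 2 * σ1 ^ 2 := by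
      rw [hyy]
      nlinarith [mul_le_mul_of_nonneg_left hxz (by positivity : (0:ℝ) ≤ 2 * η),
        mul_le_mul_of_nonneg_left hzz (by positivity : (0:ℝ) ≤ η ^ 2)]
    have hpyy : p * (1 + 2 * η * (q + p - σd) + 9 * η ^ 2 * σ1 ^ 2)
        ≤ p * ((A *ᵥ x) ⬝ᵥ (A *ᵥ x)) :=
      mul_le_mul_of_nonpos_left hyyub (le_of_lt hpneg)
    have hyPy : (A *ᵥ x) ⬝ᵥ (P *ᵥ (A *ᵥ x))
        = (A *ᵥ x) ⬝ᵥ ((P - p • 1) *ᵥ (A *ᵥ x)) + p * ((A *ᵥ x) ⬝ᵥ (A *ᵥ x)) := by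
      rw [hPy (A *ᵥ x), dotProduct_add, dotProduct_smul, smul_eq_mul]
    have hlow : q + 2 * η * (p * q - 2 * s)
        + p * (1 + 2 * η * (q + p - σd) + 9 * η ^ 2 * σ1 ^ 2) ≤ hP'h.eigenvalues i := by
      rw [hμy, hyPy, hyQy]
      have t1 : 2 * η * (p * q - 2 * s) ≤ 2 * η * (((P - Sig) *ᵥ x) ⬝ᵥ ((P - p • 1) *ᵥ x)) :=
        mul_le_mul_of_nonneg_left hzw (by positivity)
      nlinarith [t1, hpyy, mul_nonneg (sq_nonneg η) hzQz]
    have final := scalar_final p q s η σ1 σd β hq0 hs0 hss hpneg hpge hσd hσ1 hη0 hησ hβ0 hβ1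
    linarith
  · intro hp0
    have hPpsd : P.PosSemidef :=
      hP.posSemidef_iff_eigenvalues_nonneg.mpr (Pi.le_def.mpr fun i => le_trans hp0 (hple i))
    have h1 : (Aᴴ * P * A).PosSemidef := hPpsd.conjTranspose_mul_mul_same A
    rw [show Aᴴ = A from hAherm] at h1
    exact le_ciInf fun i => h1.eigenvalues_nonneg i
end

section
/- Let S, P, E ∈ ℝ^{d×d} be positive definite matrices with Σ = S + P, and suppose E commutes with Σ. Then (E(S⁻¹ − Σ⁻¹)E + Σ⁻¹)⁻¹ + (E⁻¹(P⁻¹ − Σ⁻¹)E⁻¹ + Σ⁻¹)⁻¹ = Σ. -/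
open Matrix

/-- Congruence by an invertible matrix preserves positive definiteness. -/
lemma posDef_conj {d : ℕ} {A B : Matrix (Fin d) (Fin d) ℝ} (hA : A.PosDef)
    (hB : IsUnit B) : (Bᴴ * A * B).PosDef := by
  refine Matrix.PosDef.of_dotProduct_mulVec_pos ?_ ?_
  · exact Matrix.isHermitian_conjTranspose_mul_mul B hA.1
  · intro x hx
    have hBx : B *ᵥ x ≠ 0 := by
      have hinj : Function.Injective (B.mulVec) :=
        Matrix.mulVec_injective_iff_isUnit.mpr hB
      intro h
      exact hx (hinj (by simpa using h))
    simpa only [Matrix.star_mulVec, Matrix.dotProduct_mulVec, Matrix.vecMul_vecMul]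
      using hA.dotProduct_mulVec_pos hBx

/-- If `S, P, E` are positive definite `d×d` real matrices, `Σ = S + P`, and `E`
commutes with `Σ`, then
`(E(S⁻¹ - Σ⁻¹)E + Σ⁻¹)⁻¹ + (E⁻¹(P⁻¹ - Σ⁻¹)E⁻¹ + Σ⁻¹)⁻¹ = Σ`. -/
theorem stmt2 {d : ℕ} (S P E : Matrix (Fin d) (Fin d) ℝ)
    (hS : S.PosDef) (hP : P.PosDef) (hE : E.PosDef)
    (hcomm : E * (S + P) = (S + P) * E) :
    (E * (S⁻¹ - (S + P)⁻¹) * E + (S + P)⁻¹)⁻¹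
      + (E⁻¹ * (P⁻¹ - (S + P)⁻¹) * E⁻¹ + (S + P)⁻¹)⁻¹ = S + P := by
  set T := S + P with hTdef
  have hTp : T.PosDef := hS.add hP
  haveI := hS.isUnit.invertible
  haveI := hP.isUnit.invertible
  haveI := hE.isUnit.invertible
  haveI := hTp.isUnit.invertible
  -- E commutes with T⁻¹, and E⁻¹ commutes with T⁻¹
  have hcE : T⁻¹ * E = E * T⁻¹ := by
    have h := congrArg (fun X => T⁻¹ * X * T⁻¹) hcomm
    simpa only [Matrix.mul_assoc, Matrix.inv_mul_cancel_left_of_invertible,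
      Matrix.mul_inv_cancel_left_of_invertible, Matrix.inv_mul_of_invertible,
      Matrix.mul_inv_of_invertible, Matrix.mul_one] using h
  have hcE' : T⁻¹ * E⁻¹ = E⁻¹ * T⁻¹ := by
    rw [show T⁻¹ * E⁻¹ = (E * T)⁻¹ from (Matrix.mul_inv_rev _ _).symm,
      show E⁻¹ * T⁻¹ = (T * E)⁻¹ from (Matrix.mul_inv_rev _ _).symm, hcomm]
  -- the key differences
  have hSsub : S⁻¹ - T⁻¹ = S⁻¹ * P * T⁻¹ := by
    have h : S⁻¹ * T = 1 + S⁻¹ * P := by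
      rw [hTdef, Matrix.mul_add, Matrix.inv_mul_of_invertible]
    have h2 : S⁻¹ = T⁻¹ + S⁻¹ * P * T⁻¹ := by
      calc S⁻¹ = S⁻¹ * T * T⁻¹ := by
            rw [Matrix.mul_inv_cancel_right_of_invertible]
        _ = T⁻¹ + S⁻¹ * P * T⁻¹ := by rw [h, Matrix.add_mul, Matrix.one_mul]
    exact sub_eq_of_eq_add' h2
  have hPsub : P⁻¹ - T⁻¹ = P⁻¹ * S * T⁻¹ := by
    have h : P⁻¹ * T = 1 + P⁻¹ * S := by
      rw [hTdef, Matrix.mul_add, Matrix.inv_mul_of_invertible, add_comm]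
    have h2 : P⁻¹ = T⁻¹ + P⁻¹ * S * T⁻¹ := by
      calc P⁻¹ = P⁻¹ * T * T⁻¹ := by
            rw [Matrix.mul_inv_cancel_right_of_invertible]
        _ = T⁻¹ + P⁻¹ * S * T⁻¹ := by rw [h, Matrix.add_mul, Matrix.one_mul]
    exact sub_eq_of_eq_add' h2
  set K := P * E + S * E⁻¹ with hKdef
  -- factorizations of the two summands
  have hA_eq : E * (S⁻¹ - T⁻¹) * E + T⁻¹ = E * S⁻¹ * K * T⁻¹ := by
    rw [hSsub, hKdef]
    simp only [Matrix.mul_add, Matrix.add_mul, Matrix.mul_assoc,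
      Matrix.mul_inv_cancel_left_of_invertible, Matrix.inv_mul_cancel_left_of_invertible]
    rw [hcE]
  have hB_eq : E⁻¹ * (P⁻¹ - T⁻¹) * E⁻¹ + T⁻¹ = E⁻¹ * P⁻¹ * K * T⁻¹ := by
    rw [hPsub, hKdef]
    simp only [Matrix.mul_add, Matrix.add_mul, Matrix.mul_assoc,
      Matrix.mul_inv_cancel_left_of_invertible, Matrix.inv_mul_cancel_left_of_invertible]
    rw [hcE']
    exact add_comm _ _
  -- the first summand is positive definite
  have hX : (P + P * S⁻¹ * P).PosDef := by
    refine hP.add_posSemidef ?_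
    have h := (hS.inv.posSemidef).conjTranspose_mul_mul_same P
    rwa [hP.1] at h
  have hsub_pos : (S⁻¹ - T⁻¹).PosDef := by
    have h := posDef_conj hX hTp.inv.isUnit
    rw [hTp.inv.1] at h
    have he : S⁻¹ - T⁻¹ = T⁻¹ * (P + P * S⁻¹ * P) * T⁻¹ := by
      have e1 : P + P * S⁻¹ * P = T * (S⁻¹ * P) := by
        rw [hTdef, Matrix.add_mul]
        simp only [Matrix.mul_assoc, Matrix.mul_inv_cancel_left_of_invertible]
      rw [hSsub, e1]
      simp only [← Matrix.mul_assoc, Matrix.inv_mul_of_invertible, Matrix.one_mul]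
    rwa [← he] at h
  have hA_pos : (E * (S⁻¹ - T⁻¹) * E + T⁻¹).PosDef := by
    have h := posDef_conj hsub_pos hE.isUnit
    rw [hE.1] at h
    exact h.add hTp.inv
  -- K is invertible
  have hK_unit : IsUnit K.det := by
    have hKfac : K = S * E⁻¹ * (E * (S⁻¹ - T⁻¹) * E + T⁻¹) * T := by
      rw [hA_eq]
      simp only [Matrix.mul_assoc, Matrix.inv_mul_of_invertible, Matrix.mul_one,
        Matrix.inv_mul_cancel_left_of_invertible, Matrix.mul_inv_cancel_left_of_invertible]
    rw [hKfac]
    simp only [Matrix.det_mul]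
    exact ((hS.det_pos.ne'.isUnit.mul hE.inv.det_pos.ne'.isUnit).mul
      hA_pos.det_pos.ne'.isUnit).mul hTp.det_pos.ne'.isUnit
  haveI := ((Matrix.isUnit_iff_isUnit_det K).mpr hK_unit).invertible
  -- compute the two inverses
  have hA_inv : (E * (S⁻¹ - T⁻¹) * E + T⁻¹)⁻¹ = T * (K⁻¹ * (S * E⁻¹)) := by
    rw [hA_eq, Matrix.mul_inv_rev, Matrix.mul_inv_rev, Matrix.mul_inv_rev,
      Matrix.inv_inv_of_invertible, Matrix.inv_inv_of_invertible]
  have hB_inv : (E⁻¹ * (P⁻¹ - T⁻¹) * E⁻¹ + T⁻¹)⁻¹ = T * (K⁻¹ * (P * E)) := by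
    rw [hB_eq, Matrix.mul_inv_rev, Matrix.mul_inv_rev, Matrix.mul_inv_rev,
      Matrix.inv_inv_of_invertible, Matrix.inv_inv_of_invertible, Matrix.inv_inv_of_invertible]
  rw [hA_inv, hB_inv, ← Matrix.mul_add, ← Matrix.mul_add, add_comm (S * E⁻¹), ← hKdef,
    Matrix.inv_mul_of_invertible, Matrix.mul_one]
end

section
/- Let Σ be a symmetric positive definite d×d matrix and let S₀ be a symmetric positive definite matrix such that S₀⁻¹ − Σ⁻¹ is well-defined. Then the matrix-valued function S(t) = (e^{−tΣ}(S₀⁻¹ − Σ⁻¹)e^{−tΣ} + Σ⁻¹)⁻¹ satisfies the matrix ordinary differential equation S'(t) = (Σ − S(t))S(t) + S(t)(Σ − S(t)) with S(0) = S₀, for all t for which S(t) is defined. -/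
open Matrix NormedSpace

attribute [local instance] Matrix.linftyOpNormedAddCommGroup Matrix.linftyOpNormedSpace

attribute [local instance] Matrix.linftyOpNormedRing Matrix.linftyOpNormedAlgebra

private lemma key_ring {R : Type*} [Ring R] (Sig Si M St : R)
    (h1 : M * St = 1) (h2 : St * M = 1) (h3 : Sig * Si = 1) (h4 : Si * Sig = 1) :
    -(St * ((-Sig * (M - Si)) * 1 + (M - Si) * (1 * -Sig)) * St) =
      (Sig - St) * St + St * (Sig - St) := by
  have expand : -(St * ((-Sig * (M - Si)) * 1 + (M - Si) * (1 * -Sig)) * St) =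
      St * Sig * (M * St) - St * (Sig * Si) * St + (St * M) * Sig * St - St * (Si * Sig) * St := by
    noncomm_ring
  rw [expand, h1, h2, h3, h4]
  noncomm_ring

/-- The curve `S(t) = (e^{-tΣ}(S₀⁻¹ - Σ⁻¹)e^{-tΣ} + Σ⁻¹)⁻¹` satisfies `S(0) = S₀`
and the matrix ODE `S'(t) = (Σ - S(t))S(t) + S(t)(Σ - S(t))`, for all `t` at
which the matrix being inverted is invertible. -/
theorem stmt3 {d : ℕ} (Sig S₀ : Matrix (Fin d) (Fin d) ℝ)
    (hSig : Sig.PosDef) (hS₀ : S₀.PosDef)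
    (S : ℝ → Matrix (Fin d) (Fin d) ℝ)
    (hSdef : ∀ t, S t =
      (exp (((-t : ℝ) • Sig)) * (S₀⁻¹ - Sig⁻¹) * exp (((-t : ℝ) • Sig)) + Sig⁻¹)⁻¹)
    (hinv : ∀ t,
      IsUnit (exp (((-t : ℝ) • Sig)) * (S₀⁻¹ - Sig⁻¹) * exp (((-t : ℝ) • Sig)) + Sig⁻¹)) :
    S 0 = S₀ ∧ ∀ t, HasDerivAt S ((Sig - S t) * S t + S t * (Sig - S t)) t := by
  set A : Matrix (Fin d) (Fin d) ℝ := S₀⁻¹ - Sig⁻¹ with hA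
  set E : ℝ → Matrix (Fin d) (Fin d) ℝ := fun t => exp (((-t : ℝ) • Sig)) with hEdef
  set M : ℝ → Matrix (Fin d) (Fin d) ℝ := fun t => E t * A * E t + Sig⁻¹ with hMdef
  have hSigDet : IsUnit Sig.det := hSig.det_pos.ne'.isUnit
  have hS0Det : IsUnit S₀.det := hS₀.det_pos.ne'.isUnit
  constructor
  · have h0 : E 0 = 1 := by simp [hEdef]
    have : S 0 = (S₀⁻¹)⁻¹ := by
      rw [hSdef 0]
      simp [h0, hA, sub_add_cancel]
    rw [this, Matrix.nonsing_inv_nonsing_inv _ hS0Det]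
  · intro t
    -- derivative of E
    have hsmul : ∀ s : ℝ, (-s : ℝ) • Sig = s • (-Sig) := by
      intro s; rw [neg_smul, smul_neg]
    have hE1 : HasDerivAt E (-Sig * E t) t := by
      simp only [hEdef, hsmul]
      exact hasDerivAt_exp_smul_const' (-Sig) t
    have hE2 : HasDerivAt E (E t * -Sig) t := by
      simp only [hEdef, hsmul]
      exact hasDerivAt_exp_smul_const (-Sig) t
    -- derivative of M
    have hM : HasDerivAt M ((-Sig * E t) * A * E t + (E t * A) * (E t * -Sig)) t :=
      ((hE1.mul_const A).mul hE2).add_const _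
    -- S = Ring.inverse ∘ M
    have hMu : IsUnit (M t) := hinv t
    have hSeq : ∀ s, S s = Ring.inverse (M s) := by
      intro s
      rw [hSdef s, ← Matrix.nonsing_inv_eq_ringInverse]
    have hSt : S t = (M t)⁻¹ := hSdef t
    have hMdetU : IsUnit (M t).det := (Matrix.isUnit_iff_isUnit_det _).mp hMu
    have h1 : M t * S t = 1 := by rw [hSt]; exact Matrix.mul_nonsing_inv _ hMdetU
    have h2 : S t * M t = 1 := by rw [hSt]; exact Matrix.nonsing_inv_mul _ hMdetU
    have h3 : Sig * Sig⁻¹ = 1 := Matrix.mul_nonsing_inv _ hSigDet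
    have h4 : Sig⁻¹ * Sig = 1 := Matrix.nonsing_inv_mul _ hSigDet
    -- derivative of S via chain rule
    have hunit : (↑hMu.unit⁻¹ : Matrix (Fin d) (Fin d) ℝ) = S t := by
      rw [hSt, Matrix.nonsing_inv_eq_ringInverse]
      conv_rhs => rw [← hMu.unit_spec]
      exact (Ring.inverse_unit _).symm
    have hS : HasDerivAt (fun s => Ring.inverse (M s))
        (-(S t * ((-Sig * E t) * A * E t + (E t * A) * (E t * -Sig)) * S t)) t := by
      have h := (hasFDerivAt_ringInverse (𝕜 := ℝ) hMu.unit).comp_hasDerivAt t hM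
      simp [hunit, Function.comp_def, ContinuousLinearMap.mulLeftRight_apply] at h
      simp
      exact h
    have hS' : HasDerivAt S
        (-(S t * ((-Sig * E t) * A * E t + (E t * A) * (E t * -Sig)) * S t)) t := by
      apply hS.congr_of_eventuallyEq
      filter_upwards with s using (hSeq s)
    -- rewrite the derivative
    have hP : E t * A * E t = M t - Sig⁻¹ := by simp [hMdef]
    have heq : -(S t * ((-Sig * E t) * A * E t + (E t * A) * (E t * -Sig)) * S t) =
        (Sig - S t) * S t + S t * (Sig - S t) := by
      have h5 : (-Sig * E t) * A * E t = (-Sig * (M t - Sig⁻¹)) * 1 := by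
        rw [mul_one, ← hP]; noncomm_ring
      have h6 : (E t * A) * (E t * -Sig) = (M t - Sig⁻¹) * (1 * -Sig) := by
        rw [one_mul, ← hP]; noncomm_ring
      rw [h5, h6]
      exact key_ring Sig Sig⁻¹ (M t) (S t) h1 h2 h3 h4
    rw [← heq]
    exact hS'
end

section
/- Let (s_t)_{t≥0} be a sequence with 0 < s₀ and s_t ≤ σ_d/2 for t < T, satisfying s_{t+1} ≥ (1 + η(σ_d − s_t)) s_t for all t < T, with 0 < η σ_d < 1. Then for all T' ≤ T, s_{T'}/(σ_d − s_{T'}) ≥ (1 + ησ_d)^{T'} · s₀/(σ_d − s₀). Consequently, s_t reaches σ_d/2 within O((1/(ησ_d)) ln(σ_d/s₀)) iterations. -/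
/-- If `0 < s₀`, all `s_t ∈ (0, σ_d)` for `t ≤ T`, `s_t ≤ σ_d/2` for `t < T`,
and `s_{t+1} ≥ (1 + η(σ_d - s_t))s_t` for `t < T`, with `0 < ησ_d < 1`, then
`s_{T'}/(σ_d - s_{T'}) ≥ (1 + ησ_d)^{T'} s₀/(σ_d - s₀)` for all `T' ≤ T`. -/
theorem stmt11 (σd η : ℝ) (hσd : 0 < σd) (hη : 0 < η) (hησ : η * σd < 1)
    (T : ℕ) (s : ℕ → ℝ)
    (hrange : ∀ t ≤ T, 0 < s t ∧ s t < σd)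
    (hhalf : ∀ t < T, s t ≤ σd / 2)
    (hrec : ∀ t < T, (1 + η * (σd - s t)) * s t ≤ s (t + 1)) :
    ∀ T' ≤ T, (1 + η * σd) ^ T' * (s 0 / (σd - s 0)) ≤ s T' / (σd - s T') := by
  intro T' hT'
  induction T' with
  | zero => simp
  | succ n ih =>
    have hnT : n < T := Nat.lt_of_succ_le hT'
    have ihn := ih (le_of_lt hnT)
    obtain ⟨ha0, ha1⟩ := hrange n (le_of_lt hnT)
    obtain ⟨hb0, hb1⟩ := hrange (n + 1) hT'
    have hr := hrec n hnT
    have hpos : (0:ℝ) < 1 + η * σd := by positivity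
    have key : (1 + η * σd) * (s n / (σd - s n)) ≤ s (n + 1) / (σd - s (n + 1)) := by
      have h1 : σd - s (n + 1) ≤ (1 - η * s n) * (σd - s n) := by nlinarith [hr]
      have h2 := mul_le_mul_of_nonneg_left h1 (le_of_lt (mul_pos hpos ha0))
      have h3 := mul_le_mul_of_nonneg_right hr (by linarith : (0:ℝ) ≤ σd - s n)
      rw [← mul_div_assoc, div_le_div_iff₀ (by linarith) (by linarith)]
      nlinarith [mul_pos (mul_pos (mul_pos hη hη) hσd)
        (mul_pos (mul_pos ha0 ha0) (by linarith : (0:ℝ) < σd - s n))]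
    calc (1 + η * σd) ^ (n + 1) * (s 0 / (σd - s 0))
        = (1 + η * σd) * ((1 + η * σd) ^ n * (s 0 / (σd - s 0))) := by ring
      _ ≤ (1 + η * σd) * (s n / (σd - s n)) :=
          mul_le_mul_of_nonneg_left ihn (le_of_lt hpos)
      _ ≤ s (n + 1) / (σd - s (n + 1)) := key
end
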